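/- arXiv:2002.04506 — 4 statements merged into one kernel-verified Lean document; each statement's English description precedes it below -/
import Mathlib

section
/- Let D₀ be an operator containing only e₁₁ and e₁₂ middle-tensor factors, D = D₀ + J D₀ J⁻¹, and A an operator of the form A = A₁₁ + A₂₂ (middle factors only e₁₁ and e₂₂) satisfying AJ = αJA for some α ∈ {±1}. Then [A, D] = 0 if and only if [A, D₀] = 0; the same equivalence holds for anticommutators. -/
noncomputable section
open Matrix
open scoped ComplexConjugate

abbrev M2 : Type := Matrix (Fin 2) (Fin 2) ℂ
abbrev M3 : Type := Matrix (Fin 3) (Fin 3) ℂ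
abbrev M4 : Type := Matrix (Fin 4) (Fin 4) ℂ
abbrev Idx : Type := Fin 4 × Fin 2 × Fin 4
abbrev M32 : Type := Matrix Idx Idx ℂ

/-- matrix unit `e_{ij}` -/
def eu {n : ℕ} (i j : Fin n) : Matrix (Fin n) (Fin n) ℂ := Matrix.single i j 1

/-- the element `A ⊗ E ⊗ B` of `M₄(ℂ) ⊗ M₂(ℂ) ⊗ M₄(ℂ)` realized as a matrix on `ℂ⁴ ⊗ ℂ² ⊗ ℂ⁴` -/
def tp (A : M4) (E : M2) (B : M4) : M32 :=
  Matrix.of fun p q => A p.1 q.1 * E p.2.1 q.2.1 * B p.2.2 q.2.2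

/-- a 4×4 matrix assembled from four 2×2 blocks -/
def bm (a b c d : M2) : M4 :=
  Matrix.reindex finSumFinEquiv finSumFinEquiv (Matrix.fromBlocks a b c d)

/-- block-diagonal `diag(a, b)` with 2×2 blocks -/
def diag22 (a b : M2) : M4 := bm a 0 0 b

/-- block-diagonal `diag(l, n)` with a scalar and a 3×3 block -/
def diag13 (l : ℂ) (n : M3) : M4 :=
  Matrix.reindex finSumFinEquiv finSumFinEquiv
    (Matrix.fromBlocks (Matrix.diagonal fun _ : Fin 1 => l) 0 0 n)

/-- the standard embedding of the quaternions into `M₂(ℂ)` -/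
def IsQuat (q : M2) : Prop := ∃ x y : ℂ, q = !![x, y; -(conj y), conj x]

/-- the Hilbert space `ℂ⁴ ⊗ ℂ² ⊗ ℂ⁴ ≅ M₄(ℂ) ⊕ M₄(ℂ)` -/
abbrev HSp : Type := Idx → ℂ

/-- index swap underlying the real structure `J` -/
def sw (p : Idx) : Idx := (p.2.2, if p.2.1 = 0 then 1 else 0, p.1)

/-- the antilinear real structure `J[v;w] = [w*;v*]` -/
noncomputable def Jr (ψ : HSp) : HSp := fun p => conj (ψ (sw p))

/-- action of an operator on the Hilbert space -/
def act (X : M32) (ψ : HSp) : HSp := X.mulVec ψ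

/-- conjugation `X ↦ J X J⁻¹` by the real structure, at the matrix level -/
noncomputable def Jconj (X : M32) : M32 := Matrix.of fun p q => conj (X (sw p) (sw q))

/-- the opposite-algebra element `J X* J⁻¹` -/
noncomputable def opp (X : M32) : M32 := Jconj Xᴴ

/-- representation of the (unreduced) Pati–Salam algebra `ℍ_R ⊕ ℍ_L ⊕ M₄(ℂ)` -/
def piPS (q₁ q₂ : M2) (m : M4) : M32 :=
  tp (diag22 q₁ q₂) (eu 0 0) 1 + tp m (eu 1 1) 1

/-- representation of the reduced Pati–Salam algebra `ℍ_R ⊕ ℍ_L ⊕ ℂ ⊕ M₃(ℂ)` -/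
def piRed (q₁ q₂ : M2) (l : ℂ) (n : M3) : M32 := piPS q₁ q₂ (diag13 l n)

/-- the grading γ -/
def gam : M32 := tp (diag22 1 (-1)) (eu 0 0) 1 + tp 1 (eu 1 1) (diag22 (-1) 1)

/-- the grading γ⋆ -/
def gamStar : M32 :=
  tp (diag22 1 (-1)) (eu 0 0) (diag13 1 (-1)) + tp (diag13 (-1) 1) (eu 1 1) (diag22 1 (-1))

/-- the nontrivial β for the unreduced model -/
def betaPS : M32 := tp (diag22 1 (-1)) (eu 0 0) 1 + tp 1 (eu 1 1) (diag22 1 (-1))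


/-! ### Auxiliary lemmas -/

lemma sw_sw (p : Idx) : sw (sw p) = p := by
  obtain ⟨a, b, c⟩ := p
  fin_cases b <;> rfl

lemma sw_inj : Function.Injective sw := Function.Involutive.injective sw_sw

def swE : Equiv.Perm Idx := Function.Involutive.toPerm sw sw_sw

lemma Jconj_add (X Y : M32) : Jconj (X + Y) = Jconj X + Jconj Y := by
  ext p q; simp [Jconj]

lemma Jconj_smul (c : ℂ) (X : M32) : Jconj (c • X) = conj c • Jconj X := by
  ext p q; simp [Jconj]

lemma Jconj_zero : Jconj (0 : M32) = 0 := by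
  ext p q; simp [Jconj]

lemma Jconj_mul (X Y : M32) : Jconj (X * Y) = Jconj X * Jconj Y := by
  ext p q
  simp only [Jconj, Matrix.of_apply, Matrix.mul_apply, map_sum, _root_.map_mul]
  exact Fintype.sum_equiv swE _ _ (fun r => by
    simp [swE, show ∀ r, (Function.Involutive.toPerm sw sw_sw) r = sw r from fun _ => rfl, sw_sw])

lemma Jconj_Jconj (X : M32) : Jconj (Jconj X) = X := by
  ext p q; simp [Jconj, sw_sw]

lemma fin2_eq_one {b : Fin 2} (h : b ≠ 0) : b = 1 := by
  fin_cases b <;> simp_all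

lemma row_mul {c : Fin 2} (X Y : M32)
    (h : ∀ p r q : Idx, X p r ≠ 0 → Y r q ≠ 0 → p.2.1 = c) :
    ∀ p q, (X * Y) p q ≠ 0 → p.2.1 = c := by
  intro p q hpq
  by_contra hc
  apply hpq
  rw [Matrix.mul_apply]
  apply Finset.sum_eq_zero
  intro r _
  by_cases h1 : X p r = 0
  · simp [h1]
  by_cases h2 : Y r q = 0
  · simp [h2]
  exact absurd (h p r q h1 h2) hc

lemma row_add {c : Fin 2} (X Y : M32)
    (hX : ∀ p q, X p q ≠ 0 → p.2.1 = c) (hY : ∀ p q, Y p q ≠ 0 → p.2.1 = c) :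
    ∀ p q, (X + Y) p q ≠ 0 → p.2.1 = c := by
  intro p q h
  by_contra hc
  apply h
  have hx : X p q = 0 := by by_contra h'; exact hc (hX p q h')
  have hy : Y p q = 0 := by by_contra h'; exact hc (hY p q h')
  simp [hx, hy]

lemma row_smul {c : Fin 2} (s : ℂ) (X : M32)
    (hX : ∀ p q, X p q ≠ 0 → p.2.1 = c) :
    ∀ p q, (s • X) p q ≠ 0 → p.2.1 = c := by
  intro p q h
  apply hX p q
  intro h'
  exact h (by simp [h'])

lemma add_rows_eq_zero (X Y : M32)
    (hX : ∀ p q, X p q ≠ 0 → p.2.1 = 0)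
    (hY : ∀ p q, Y p q ≠ 0 → p.2.1 = 1) :
    X + Y = 0 ↔ X = 0 ∧ Y = 0 := by
  constructor
  · intro h
    have h' : ∀ p q, X p q + Y p q = 0 := fun p q => congrFun (congrFun h p) q
    constructor <;> ext p q <;> simp only [Matrix.zero_apply]
    · by_cases hp : p.2.1 = 0
      · have hy : Y p q = 0 := by
          by_contra hy; rw [hY p q hy] at hp; exact absurd hp (by decide)
        have := h' p q; rw [hy, add_zero] at this; exact this
      · by_contra hx; exact hp (hX p q hx)
    · by_cases hp : p.2.1 = 1
      · have hx : X p q = 0 := by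
          by_contra hx; rw [hX p q hx] at hp; exact absurd hp (by decide)
        have := h' p q; rw [hx, zero_add] at this; exact this
      · by_contra hy; exact hp (hY p q hy)
  · rintro ⟨h1, h2⟩; rw [h1, h2, add_zero]

lemma key_aux (D0 A : M32) (α s : ℂ) (hα2 : α * α = 1) (hs : conj s = s)
    (hD0 : ∀ p q : Idx, D0 p q ≠ 0 → p.2.1 = 0)
    (hA : ∀ p q : Idx, A p q ≠ 0 → p.2.1 = q.2.1)
    (hJA : Jconj A = α • A) :
    A * (D0 + Jconj D0) + s • ((D0 + Jconj D0) * A) = 0 ↔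
      A * D0 + s • (D0 * A) = 0 := by
  have hα0 : α ≠ 0 := by
    intro h; rw [h, mul_zero] at hα2; exact one_ne_zero hα2.symm
  have hrJ : ∀ p q, Jconj D0 p q ≠ 0 → p.2.1 = 1 := by
    intro p q h
    have h0 : D0 (sw p) (sw q) ≠ 0 := fun hz => h (by simp [Jconj, hz])
    have h1 : (sw p).2.1 = 0 := hD0 _ _ h0
    simp only [sw] at h1
    by_cases hp : p.2.1 = 0
    · rw [if_pos hp] at h1; exact absurd h1 (by decide)
    · exact fin2_eq_one hp
  have hXrow : ∀ p q, (A * D0 + s • (D0 * A)) p q ≠ 0 → p.2.1 = 0 :=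
    row_add _ _ (row_mul _ _ (fun p r q h1 h2 => (hA p r h1).trans (hD0 r q h2)))
      (row_smul _ _ (row_mul _ _ (fun p r q h1 _ => hD0 p r h1)))
  have hYrow : ∀ p q, (A * Jconj D0 + s • (Jconj D0 * A)) p q ≠ 0 → p.2.1 = 1 :=
    row_add _ _ (row_mul _ _ (fun p r q h1 h2 => (hA p r h1).trans (hrJ r q h2)))
      (row_smul _ _ (row_mul _ _ (fun p r q h1 _ => hrJ p r h1)))
  have hexp : A * (D0 + Jconj D0) + s • ((D0 + Jconj D0) * A) =
      (A * D0 + s • (D0 * A)) + (A * Jconj D0 + s • (Jconj D0 * A)) := by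
    rw [mul_add, add_mul, smul_add]; abel
  have hJX : Jconj (A * D0 + s • (D0 * A)) =
      α • (A * Jconj D0 + s • (Jconj D0 * A)) := by
    rw [Jconj_add, Jconj_mul, Jconj_smul, Jconj_mul, hJA, hs,
      Matrix.smul_mul, Matrix.mul_smul, smul_comm s α, ← smul_add]
  have hYiff : (A * Jconj D0 + s • (Jconj D0 * A)) = 0 ↔
      (A * D0 + s • (D0 * A)) = 0 := by
    constructor
    · intro h
      have h0 : Jconj (A * D0 + s • (D0 * A)) = 0 := by rw [hJX, h, smul_zero]
      calc A * D0 + s • (D0 * A) = Jconj (Jconj (A * D0 + s • (D0 * A))) :=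
            (Jconj_Jconj _).symm
        _ = 0 := by rw [h0, Jconj_zero]
    · intro h
      have h0 : Jconj (A * D0 + s • (D0 * A)) = 0 := by rw [h, Jconj_zero]
      rw [hJX] at h0
      rcases smul_eq_zero.mp h0 with h'|h'
      · exact absurd h' hα0
      · exact h'
  rw [hexp, add_rows_eq_zero _ _ hXrow hYrow]
  exact ⟨fun h => h.1, fun h => ⟨h, hYiff.mpr h⟩⟩

/-- For `D = D₀ + J D₀ J⁻¹` with `D₀` having only `e₁₁, e₁₂` middle components and
`A = A₁₁ + A₂₂` with `AJ = αJA`, `α = ±1`: `[A,D] = 0 ↔ [A,D₀] = 0`, and likewise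
for anticommutators. -/
theorem commute_D_iff_commute_D0 (D0 A : M32) (α : ℂ)
    (hα : α = 1 ∨ α = -1)
    (hD0 : ∀ p q : Idx, D0 p q ≠ 0 → p.2.1 = 0)
    (hA : ∀ p q : Idx, A p q ≠ 0 → p.2.1 = q.2.1)
    (hAJ : ∀ ψ : HSp, act A (Jr ψ) = α • Jr (act A ψ)) :
    (A * (D0 + Jconj D0) = (D0 + Jconj D0) * A ↔ A * D0 = D0 * A) ∧
    (A * (D0 + Jconj D0) + (D0 + Jconj D0) * A = 0 ↔ A * D0 + D0 * A = 0) := by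
  have hα2 : α * α = 1 := by rcases hα with h|h <;> rw [h] <;> norm_num
  have key : ∀ p q : Idx, A p q = α * conj (A (sw p) (sw q)) := by
    intro p q
    have h := congrFun (hAJ (fun r => if r = sw q then 1 else 0)) p
    simp only [act, Jr, Matrix.mulVec, dotProduct, sw_inj.eq_iff,
      apply_ite (starRingEnd ℂ), _root_.map_one, _root_.map_zero, mul_ite, mul_one, mul_zero,
      Finset.sum_ite_eq', Finset.mem_univ, if_true, Pi.smul_apply,
      smul_eq_mul] at h
    exact h
  have hJA : Jconj A = α • A := by
    ext p q
    simp only [Jconj, Matrix.of_apply, Matrix.smul_apply, smul_eq_mul]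
    rw [key p q, ← mul_assoc, hα2, one_mul]
  constructor
  · have h := key_aux D0 A α (-1) hα2 (by simp) hD0 hA hJA
    simp only [neg_smul, one_smul, ← sub_eq_add_neg, sub_eq_zero] at h
    exact h
  · have h := key_aux D0 A α 1 hα2 (by simp) hD0 hA hJA
    simpa using h
end
end

section
/- An operator D = D₀ + J D₀ J⁻¹ (with D₀ having only e₁₁ and e₁₂ middle components) anticommutes with the grading γ = diag(1₂, -1₂) ⊗ e₁₁ ⊗ 1₄ + 1₄ ⊗ e₂₂ ⊗ diag(-1₂, 1₂) if and only if D₀ = Σ_k { [[0, X_k],[Y_k, 0]] ⊗ e₁₁ ⊗ A_k + [[P_k, Q_k],[0, 0]] ⊗ e₁₂ ⊗ [[Z_k, 0],[T_k, 0]] + [[0,0],[U_k, V_k]] ⊗ e₁₂ ⊗ [[0, W_k],[0, S_k]] }, where all blocks are 2×2 complex matrices and A_k ∈ M_4(ℂ). -/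
noncomputable section
open Matrix
open scoped ComplexConjugate

-- ### helpers
lemma bm_apply (a b c d : M2) (i j : Fin 4) :
    bm a b c d i j =
      if hi : (i:ℕ) < 2 then
        (if hj : (j:ℕ) < 2 then a ⟨i,hi⟩ ⟨j,hj⟩ else b ⟨i,hi⟩ ⟨j-2, by omega⟩)
      else
        (if hj : (j:ℕ) < 2 then c ⟨i-2, by omega⟩ ⟨j,hj⟩ else d ⟨i-2, by omega⟩ ⟨j-2, by omega⟩) := by
  fin_cases i <;> fin_cases j <;>
    simp [bm, Matrix.fromBlocks, finSumFinEquiv, Fin.ext_iff] <;> rfl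

lemma eu_apply {n : ℕ} (i j p q : Fin n) : eu i j p q = if i = p ∧ j = q then 1 else 0 := by
  simp [eu, Matrix.single]

def lo (x : Fin 2) : Fin 4 := ⟨x, by omega⟩
def hi (x : Fin 2) : Fin 4 := ⟨x + 2, by omega⟩

lemma bm_eu_tl (x y : Fin 2) : bm (eu x y) 0 0 0 = eu (lo x) (lo y) := by
  ext p q; rw [bm_apply]
  fin_cases x <;> fin_cases y <;> fin_cases p <;> fin_cases q <;>
    simp [eu_apply, lo, hi, Fin.ext_iff] <;> rw [if_neg (by omega)]

lemma bm_eu_tr (x y : Fin 2) : bm 0 (eu x y) 0 0 = eu (lo x) (hi y) := by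
  ext p q; rw [bm_apply]
  fin_cases x <;> fin_cases y <;> fin_cases p <;> fin_cases q <;>
    simp [eu_apply, lo, hi, Fin.ext_iff] <;> rw [if_neg (by omega)]

lemma bm_eu_bl (x y : Fin 2) : bm 0 0 (eu x y) 0 = eu (hi x) (lo y) := by
  ext p q; rw [bm_apply]
  fin_cases x <;> fin_cases y <;> fin_cases p <;> fin_cases q <;>
    simp [eu_apply, lo, hi, Fin.ext_iff] <;> rw [if_neg (by omega)]

lemma bm_eu_br (x y : Fin 2) : bm 0 0 0 (eu x y) = eu (hi x) (hi y) := by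
  ext p q; rw [bm_apply]
  fin_cases x <;> fin_cases y <;> fin_cases p <;> fin_cases q <;>
    simp [eu_apply, lo, hi, Fin.ext_iff] <;> rw [if_neg (by omega)]

lemma bm_smul (r : ℂ) (a b c d : M2) :
    bm (r • a) (r • b) (r • c) (r • d) = r • bm a b c d := by
  ext p q; rw [Matrix.smul_apply, bm_apply, bm_apply]; split_ifs <;> simp

lemma bm_zero : bm 0 0 0 0 = (0 : M4) := by
  ext p q; rw [bm_apply]; split_ifs <;> rfl

lemma tp_zero_right (A : M4) (E : M2) : tp A E 0 = 0 := by
  ext p q; simp [tp]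

lemma tp_zero_left (E : M2) (B : M4) : tp 0 E B = 0 := by
  ext p q; simp [tp]

lemma tp_smul_right (r : ℂ) (A : M4) (E : M2) (B : M4) : tp A E (r • B) = r • tp A E B := by
  ext p q; simp [tp]; ring

lemma tp_smul_left (r : ℂ) (A : M4) (E : M2) (B : M4) : tp (r • A) E B = r • tp A E B := by
  ext p q; simp [tp]; ring

lemma tp_eu (i j : Fin 4) (m e : Fin 2) (a b : Fin 4) :
    tp (eu i j) (eu m e) (eu a b) = Matrix.single ((i,m,a) : Idx) (j,e,b) 1 := by
  ext ⟨p1,p2,p3⟩ ⟨q1,q2,q3⟩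
  simp [tp, eu_apply, Matrix.single, Prod.ext_iff]
  split_ifs <;> simp_all

-- vanishing lemmas
lemma bm_offdiag_vanish (X Y : M2) {i j : Fin 4} (h : ((i:ℕ)<2 ↔ (j:ℕ)<2)) :
    bm 0 X Y 0 i j = 0 := by
  rw [bm_apply]; split_ifs <;> first | rfl | omega
lemma bm_top_vanish (P Q : M2) {i j : Fin 4} (h : 2 ≤ (i:ℕ)) : bm P Q 0 0 i j = 0 := by
  rw [bm_apply]; split_ifs <;> first | rfl | omega
lemma bm_bot_vanish (U V : M2) {i j : Fin 4} (h : (i:ℕ) < 2) : bm 0 0 U V i j = 0 := by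
  rw [bm_apply]; split_ifs <;> first | rfl | omega
lemma bm_left_vanish (Z T : M2) {i j : Fin 4} (h : 2 ≤ (j:ℕ)) : bm Z 0 T 0 i j = 0 := by
  rw [bm_apply]; split_ifs <;> first | rfl | omega
lemma bm_right_vanish (W S : M2) {i j : Fin 4} (h : (j:ℕ) < 2) : bm 0 W 0 S i j = 0 := by
  rw [bm_apply]; split_ifs <;> first | rfl | omega

-- the sign function
def gv (p : Idx) : ℂ :=
  if p.2.1 = 0 then (if (p.1:ℕ) < 2 then 1 else -1) else (if (p.2.2:ℕ) < 2 then -1 else 1)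

lemma gv_vals (p : Idx) : gv p = 1 ∨ gv p = -1 := by
  unfold gv; split_ifs <;> simp

lemma gv_sw (p : Idx) : gv (sw p) = - gv p := by
  obtain ⟨i, m, a⟩ := p
  fin_cases m <;> unfold gv sw <;> simp <;> split_ifs <;> norm_num

lemma gam_apply (p q : Idx) : gam p q = if p = q then gv q else 0 := by
  obtain ⟨i, m, a⟩ := p; obtain ⟨j, e, b⟩ := q
  have h1 : diag22 1 (-1) i j = if i = j then (if (i:ℕ) < 2 then 1 else -1) else 0 := by
    fin_cases i <;> fin_cases j <;>
      simp [diag22, bm_apply, Fin.ext_iff, Matrix.one_apply,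
        show ((3:Fin 4):ℕ) = 3 from rfl, show ((2:Fin 4):ℕ) = 2 from rfl]
  have h2 : diag22 (-1) 1 a b = if a = b then (if (a:ℕ) < 2 then -1 else 1) else 0 := by
    fin_cases a <;> fin_cases b <;>
      simp [diag22, bm_apply, Fin.ext_iff, Matrix.one_apply,
        show ((3:Fin 4):ℕ) = 3 from rfl, show ((2:Fin 4):ℕ) = 2 from rfl]
  simp only [gam, Matrix.add_apply, tp, Matrix.of_apply, h1, h2, eu_apply, Matrix.one_apply, gv,
    Prod.mk.injEq]
  fin_cases m <;> fin_cases e <;>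
    rcases eq_or_ne i j with rfl | hij <;> rcases eq_or_ne a b with rfl | hab <;>
    simp_all <;> split_ifs <;> first | rfl | ring | omega

-- recombination lemmas
lemma bm_unit_tl {i j : Fin 4} (h1 : (i:ℕ) < 2) (h2 : (j:ℕ) < 2) :
    bm (eu ⟨i,h1⟩ ⟨j,h2⟩) 0 0 0 = eu i j := by
  rw [bm_eu_tl]
  have e1 : lo ⟨i,h1⟩ = i := by ext; simp [lo]
  have e2 : lo ⟨j,h2⟩ = j := by ext; simp [lo]
  rw [e1, e2]
lemma bm_unit_tr {i j : Fin 4} (h1 : (i:ℕ) < 2) (h2 : 2 ≤ (j:ℕ)) :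
    bm 0 (eu ⟨i,h1⟩ ⟨(j:ℕ)-2, by omega⟩) 0 0 = eu i j := by
  rw [bm_eu_tr]
  have e1 : lo ⟨i,h1⟩ = i := by ext; simp [lo]
  have e2 : hi ⟨(j:ℕ)-2, by omega⟩ = j := by ext; simp [hi]; omega
  rw [e1, e2]
lemma bm_unit_bl {i j : Fin 4} (h1 : 2 ≤ (i:ℕ)) (h2 : (j:ℕ) < 2) :
    bm 0 0 (eu ⟨(i:ℕ)-2, by omega⟩ ⟨j,h2⟩) 0 = eu i j := by
  rw [bm_eu_bl]
  have e1 : hi ⟨(i:ℕ)-2, by omega⟩ = i := by ext; simp [hi]; omega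
  have e2 : lo ⟨j,h2⟩ = j := by ext; simp [lo]
  rw [e1, e2]
lemma bm_unit_br {i j : Fin 4} (h1 : 2 ≤ (i:ℕ)) (h2 : 2 ≤ (j:ℕ)) :
    bm 0 0 0 (eu ⟨(i:ℕ)-2, by omega⟩ ⟨(j:ℕ)-2, by omega⟩) = eu i j := by
  rw [bm_eu_br]
  have e1 : hi ⟨(i:ℕ)-2, by omega⟩ = i := by ext; simp [hi]; omega
  have e2 : hi ⟨(j:ℕ)-2, by omega⟩ = j := by ext; simp [hi]; omega
  rw [e1, e2]

lemma bm_smul_tl (r : ℂ) (A : M2) : bm (r • A) 0 0 0 = r • bm A 0 0 0 := by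
  have := bm_smul r A 0 0 0; simpa using this
lemma bm_smul_tr (r : ℂ) (A : M2) : bm 0 (r • A) 0 0 = r • bm 0 A 0 0 := by
  have := bm_smul r 0 A 0 0; simpa using this
lemma bm_smul_bl (r : ℂ) (A : M2) : bm 0 0 (r • A) 0 = r • bm 0 0 A 0 := by
  have := bm_smul r 0 0 A 0; simpa using this
lemma bm_smul_br (r : ℂ) (A : M2) : bm 0 0 0 (r • A) = r • bm 0 0 0 A := by
  have := bm_smul r 0 0 0 A; simpa using this

-- component functions for the construction
section comps
variable (D0 : M32)

def c1 (pq : Idx × Idx) : Prop := pq.1.2.1 = 0 ∧ pq.2.2.1 = 0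
def c2 (pq : Idx × Idx) : Prop :=
  pq.1.2.1 = 0 ∧ pq.2.2.1 = 1 ∧ (pq.1.1:ℕ) < 2 ∧ (pq.2.2.2:ℕ) < 2
def c3 (pq : Idx × Idx) : Prop :=
  pq.1.2.1 = 0 ∧ pq.2.2.1 = 1 ∧ 2 ≤ (pq.1.1:ℕ) ∧ 2 ≤ (pq.2.2.2:ℕ)

instance (pq : Idx × Idx) : Decidable (c1 pq) := by unfold c1; infer_instance
instance (pq : Idx × Idx) : Decidable (c2 pq) := by unfold c2; infer_instance
instance (pq : Idx × Idx) : Decidable (c3 pq) := by unfold c3; infer_instance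

def Xf (pq : Idx × Idx) : M2 :=
  if h : c1 pq ∧ (pq.1.1:ℕ) < 2 ∧ 2 ≤ (pq.2.1:ℕ) then
    eu ⟨pq.1.1, h.2.1⟩ ⟨(pq.2.1:ℕ) - 2, by omega⟩ else 0
def Yf (pq : Idx × Idx) : M2 :=
  if h : c1 pq ∧ 2 ≤ (pq.1.1:ℕ) ∧ (pq.2.1:ℕ) < 2 then
    eu ⟨(pq.1.1:ℕ) - 2, by omega⟩ ⟨pq.2.1, h.2.2⟩ else 0
def Af (pq : Idx × Idx) : M4 :=
  if c1 pq then D0 pq.1 pq.2 • eu pq.1.2.2 pq.2.2.2 else 0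

def Pf (pq : Idx × Idx) : M2 :=
  if h : c2 pq ∧ (pq.2.1:ℕ) < 2 then eu ⟨pq.1.1, h.1.2.2.1⟩ ⟨pq.2.1, h.2⟩ else 0
def Qf (pq : Idx × Idx) : M2 :=
  if h : c2 pq ∧ 2 ≤ (pq.2.1:ℕ) then eu ⟨pq.1.1, h.1.2.2.1⟩ ⟨(pq.2.1:ℕ) - 2, by omega⟩ else 0
def Zf (pq : Idx × Idx) : M2 :=
  if h : c2 pq ∧ (pq.1.2.2:ℕ) < 2 then
    D0 pq.1 pq.2 • eu ⟨pq.1.2.2, h.2⟩ ⟨pq.2.2.2, h.1.2.2.2⟩ else 0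
def Tf (pq : Idx × Idx) : M2 :=
  if h : c2 pq ∧ 2 ≤ (pq.1.2.2:ℕ) then
    D0 pq.1 pq.2 • eu ⟨(pq.1.2.2:ℕ) - 2, by omega⟩ ⟨pq.2.2.2, h.1.2.2.2⟩ else 0

def Uf (pq : Idx × Idx) : M2 :=
  if h : c3 pq ∧ (pq.2.1:ℕ) < 2 then eu ⟨(pq.1.1:ℕ) - 2, by omega⟩ ⟨pq.2.1, h.2⟩ else 0
def Vf (pq : Idx × Idx) : M2 :=
  if h : c3 pq ∧ 2 ≤ (pq.2.1:ℕ) then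
    eu ⟨(pq.1.1:ℕ) - 2, by omega⟩ ⟨(pq.2.1:ℕ) - 2, by omega⟩ else 0
def Wf (pq : Idx × Idx) : M2 :=
  if h : c3 pq ∧ (pq.1.2.2:ℕ) < 2 then
    D0 pq.1 pq.2 • eu ⟨pq.1.2.2, h.2⟩ ⟨(pq.2.2.2:ℕ) - 2, by omega⟩ else 0
def Sf (pq : Idx × Idx) : M2 :=
  if h : c3 pq ∧ 2 ≤ (pq.1.2.2:ℕ) then
    D0 pq.1 pq.2 • eu ⟨(pq.1.2.2:ℕ) - 2, by omega⟩ ⟨(pq.2.2.2:ℕ) - 2, by omega⟩ else 0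

def bigterm (pq : Idx × Idx) : M32 :=
  tp (bm 0 (Xf pq) (Yf pq) 0) (eu 0 0) (Af D0 pq) +
  tp (bm (Pf pq) (Qf pq) 0 0) (eu 0 1) (bm (Zf D0 pq) 0 (Tf D0 pq) 0) +
  tp (bm 0 0 (Uf pq) (Vf pq)) (eu 0 1) (bm 0 (Wf D0 pq) 0 (Sf D0 pq))

end comps

lemma smul_E (p q : Idx) (r : ℂ) :
    r • Matrix.single p q (1:ℂ) = Matrix.single p q r := by
  rw [Matrix.smul_single, smul_eq_mul, mul_one]

lemma term_eq (D0 : M32) (hD0 : ∀ p q : Idx, D0 p q ≠ 0 → p.2.1 = 0)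
    (hC : ∀ p q : Idx, gv p = gv q → D0 p q = 0) (pq : Idx × Idx) :
    bigterm D0 pq = D0 pq.1 pq.2 • Matrix.single pq.1 pq.2 1 := by
  obtain ⟨⟨i,m,a⟩,⟨j,e,b⟩⟩ := pq
  fin_cases m <;> fin_cases e
  · -- m = 0, e = 0
    rcases Nat.lt_or_ge (i:ℕ) 2 with hi1 | hi1 <;> rcases Nat.lt_or_ge (j:ℕ) 2 with hj1 | hj1
    · have hc : D0 (i,0,a) (j,0,b) = 0 := hC _ _ (by unfold gv; simp [hi1, hj1])
      have h1 : ¬(2 ≤ (i:ℕ)) := by omega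
      have h2 : ¬(2 ≤ (j:ℕ)) := by omega
      simp [bigterm, Xf, Yf, Af, Pf, Qf, Zf, Tf, Uf, Vf, Wf, Sf, c1, c2, c3,
        hi1, hj1, h1, h2, bm_zero, tp_zero_left, tp_zero_right, hc]
    · have h1 : ¬((j:ℕ) < 2) := by omega
      simp only [bigterm, Xf, Yf, Af, Pf, Qf, Zf, Tf, Uf, Vf, Wf, Sf, c1, c2, c3]
      simp [hi1, hj1, h1, bm_zero, tp_zero_left, tp_zero_right]
      rw [bm_unit_tr hi1 hj1, tp_smul_right, tp_eu]
      try rw [smul_E]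
    · have h1 : ¬((i:ℕ) < 2) := by omega
      simp only [bigterm, Xf, Yf, Af, Pf, Qf, Zf, Tf, Uf, Vf, Wf, Sf, c1, c2, c3]
      simp [hi1, hj1, h1, bm_zero, tp_zero_left, tp_zero_right]
      rw [bm_unit_bl hi1 hj1, tp_smul_right, tp_eu]
      try rw [smul_E]
    · have hc : D0 (i,0,a) (j,0,b) = 0 := hC _ _ (by
        unfold gv; simp [show ¬((i:ℕ)<2) by omega, show ¬((j:ℕ)<2) by omega])
      have h1 : ¬((i:ℕ) < 2) := by omega
      have h2 : ¬((j:ℕ) < 2) := by omega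
      simp [bigterm, Xf, Yf, Af, Pf, Qf, Zf, Tf, Uf, Vf, Wf, Sf, c1, c2, c3,
        hi1, hj1, h1, h2, bm_zero, tp_zero_left, tp_zero_right, hc]
  · -- m = 0, e = 1
    rcases Nat.lt_or_ge (i:ℕ) 2 with hi1 | hi1 <;> rcases Nat.lt_or_ge (b:ℕ) 2 with hb1 | hb1
    · -- live : c2
      simp only [bigterm, Xf, Yf, Af, Pf, Qf, Zf, Tf, Uf, Vf, Wf, Sf, c1, c2, c3]
      have h1 : ¬(2 ≤ (i:ℕ)) := by omega
      rcases Nat.lt_or_ge (j:ℕ) 2 with hj1 | hj1 <;> rcases Nat.lt_or_ge (a:ℕ) 2 with ha1 | ha1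
      · simp [hi1, hb1, hj1, ha1, h1, show ¬(2 ≤ (j:ℕ)) by omega, show ¬(2 ≤ (a:ℕ)) by omega,
          bm_zero, tp_zero_left, tp_zero_right]
        rw [bm_unit_tl hi1 hj1, bm_smul_tl, bm_unit_tl ha1 hb1, tp_smul_right, tp_eu]
        try rw [smul_E]
      · simp [hi1, hb1, hj1, ha1, h1, show ¬(2 ≤ (j:ℕ)) by omega, show ¬((a:ℕ) < 2) by omega,
          bm_zero, tp_zero_left, tp_zero_right]
        rw [bm_unit_tl hi1 hj1, bm_smul_bl, bm_unit_bl ha1 hb1, tp_smul_right, tp_eu]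
        try rw [smul_E]
      · simp [hi1, hb1, hj1, ha1, h1, show ¬((j:ℕ) < 2) by omega, show ¬(2 ≤ (a:ℕ)) by omega,
          bm_zero, tp_zero_left, tp_zero_right]
        rw [bm_unit_tr hi1 hj1, bm_smul_tl, bm_unit_tl ha1 hb1, tp_smul_right, tp_eu]
        try rw [smul_E]
      · simp [hi1, hb1, hj1, ha1, h1, show ¬((j:ℕ) < 2) by omega, show ¬((a:ℕ) < 2) by omega,
          bm_zero, tp_zero_left, tp_zero_right]
        rw [bm_unit_tr hi1 hj1, bm_smul_bl, bm_unit_bl ha1 hb1, tp_smul_right, tp_eu]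
        try rw [smul_E]
    · -- dead : i<2, 2≤b
      have hc : D0 (i,0,a) (j,1,b) = 0 := hC _ _ (by
        unfold gv; simp [hi1, show ¬((b:ℕ)<2) by omega])
      simp [bigterm, Xf, Yf, Af, Pf, Qf, Zf, Tf, Uf, Vf, Wf, Sf, c1, c2, c3,
        hi1, hb1, show ¬(2 ≤ (i:ℕ)) by omega, show ¬((b:ℕ) < 2) by omega,
        bm_zero, tp_zero_left, tp_zero_right, hc]
    · -- dead : 2≤i, b<2
      have hc : D0 (i,0,a) (j,1,b) = 0 := hC _ _ (by
        unfold gv; simp [hb1, show ¬((i:ℕ)<2) by omega])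
      simp [bigterm, Xf, Yf, Af, Pf, Qf, Zf, Tf, Uf, Vf, Wf, Sf, c1, c2, c3,
        hi1, hb1, show ¬((i:ℕ) < 2) by omega, show ¬(2 ≤ (b:ℕ)) by omega,
        bm_zero, tp_zero_left, tp_zero_right, hc]
    · -- live : c3
      simp only [bigterm, Xf, Yf, Af, Pf, Qf, Zf, Tf, Uf, Vf, Wf, Sf, c1, c2, c3]
      have h1 : ¬((i:ℕ) < 2) := by omega
      have h2 : ¬((b:ℕ) < 2) := by omega
      rcases Nat.lt_or_ge (j:ℕ) 2 with hj1 | hj1 <;> rcases Nat.lt_or_ge (a:ℕ) 2 with ha1 | ha1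
      · simp [hi1, hb1, hj1, ha1, h1, h2, show ¬(2 ≤ (j:ℕ)) by omega, show ¬(2 ≤ (a:ℕ)) by omega,
          bm_zero, tp_zero_left, tp_zero_right]
        rw [bm_unit_bl hi1 hj1, bm_smul_tr, bm_unit_tr ha1 hb1, tp_smul_right, tp_eu]
        try rw [smul_E]
      · simp [hi1, hb1, hj1, ha1, h1, h2, show ¬(2 ≤ (j:ℕ)) by omega, show ¬((a:ℕ) < 2) by omega,
          bm_zero, tp_zero_left, tp_zero_right]
        rw [bm_unit_bl hi1 hj1, bm_smul_br, bm_unit_br ha1 hb1, tp_smul_right, tp_eu]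
        try rw [smul_E]
      · simp [hi1, hb1, hj1, ha1, h1, h2, show ¬((j:ℕ) < 2) by omega, show ¬(2 ≤ (a:ℕ)) by omega,
          bm_zero, tp_zero_left, tp_zero_right]
        rw [bm_unit_br hi1 hj1, bm_smul_tr, bm_unit_tr ha1 hb1, tp_smul_right, tp_eu]
        try rw [smul_E]
      · simp [hi1, hb1, hj1, ha1, h1, h2, show ¬((j:ℕ) < 2) by omega, show ¬((a:ℕ) < 2) by omega,
          bm_zero, tp_zero_left, tp_zero_right]
        rw [bm_unit_br hi1 hj1, bm_smul_br, bm_unit_br ha1 hb1, tp_smul_right, tp_eu]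
        try rw [smul_E]
  · -- m = 1, e = 0
    have hc : D0 (i,1,a) (j,0,b) = 0 := by
      by_contra h; simpa using hD0 _ _ h
    simp [bigterm, Xf, Yf, Af, Pf, Qf, Zf, Tf, Uf, Vf, Wf, Sf, c1, c2, c3,
      bm_zero, tp_zero_left, tp_zero_right, hc, Fin.ext_iff]
  · -- m = 1, e = 1
    have hc : D0 (i,1,a) (j,1,b) = 0 := by
      by_contra h; simpa using hD0 _ _ h
    simp [bigterm, Xf, Yf, Af, Pf, Qf, Zf, Tf, Uf, Vf, Wf, Sf, c1, c2, c3,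
      bm_zero, tp_zero_left, tp_zero_right, hc, Fin.ext_iff]

lemma mul_gam (M : M32) (p q : Idx) : (M * gam) p q = M p q * gv q := by
  rw [Matrix.mul_apply]
  rw [Finset.sum_eq_single q (fun x _ hx => by rw [gam_apply]; simp [hx])
    (fun h => absurd (Finset.mem_univ q) h)]
  rw [gam_apply]; simp

lemma gam_mul (M : M32) (p q : Idx) : (gam * M) p q = gv p * M p q := by
  rw [Matrix.mul_apply]
  rw [Finset.sum_eq_single p (fun x _ hx => by rw [gam_apply]; simp [Ne.symm hx])
    (fun h => absurd (Finset.mem_univ p) h)]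
  rw [gam_apply]; simp

lemma anti_iff (D0 : M32) (hD0 : ∀ p q : Idx, D0 p q ≠ 0 → p.2.1 = 0) :
    (D0 + Jconj D0) * gam + gam * (D0 + Jconj D0) = 0 ↔
    (∀ p q : Idx, gv p = gv q → D0 p q = 0) := by
  set M : M32 := D0 + Jconj D0 with hMdef
  have Mentry : ∀ p q : Idx, M p q = D0 p q + conj (D0 (sw p) (sw q)) := fun p q => rfl
  constructor
  · intro h p q hg
    have h' : (M * gam + gam * M) p q = (0 : M32) p q := by rw [h]
    rw [Matrix.add_apply, mul_gam, gam_mul, Matrix.zero_apply, hg] at h'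
    have hM : M p q = 0 := by
      rcases gv_vals q with hv | hv <;> rw [hv] at h' <;>
        · simp only [mul_one, mul_neg_one, one_mul, neg_one_mul, neg_add_rev, neg_neg] at h'
          first
          | exact add_self_eq_zero.mp h'
          | · have : M p q + M p q = 0 := by linear_combination -h'
              exact add_self_eq_zero.mp this
    by_cases hm : p.2.1 = 0
    · have hsw : D0 (sw p) (sw q) = 0 := by
        by_contra hne
        have := hD0 _ _ hne
        simp [sw, hm] at this
      rw [Mentry, hsw, map_zero, add_zero] at hM
      exact hM
    · by_contra hne; exact hm (hD0 _ _ hne)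
  · intro hc
    ext p q
    rw [Matrix.add_apply, mul_gam, gam_mul, Matrix.zero_apply]
    by_cases hg : gv p = gv q
    · have hM : M p q = 0 := by
        rw [Mentry, hc _ _ hg, hc _ _ (by rw [gv_sw, gv_sw, hg]), map_zero, add_zero]
      rw [hM]; ring
    · rcases gv_vals p with h1 | h1 <;> rcases gv_vals q with h2 | h2 <;>
        first
        | (exact absurd (h1.trans h2.symm) hg)
        | (rw [h1, h2]; ring)

lemma decomp_C (D0 : M32) (n : ℕ) (X Y P Q Z T U V W S : Fin n → M2) (A : Fin n → M4)
    (hD : D0 = ∑ k : Fin n,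
        (tp (bm 0 (X k) (Y k) 0) (eu 0 0) (A k) +
         tp (bm (P k) (Q k) 0 0) (eu 0 1) (bm (Z k) 0 (T k) 0) +
         tp (bm 0 0 (U k) (V k)) (eu 0 1) (bm 0 (W k) 0 (S k)))) :
    ∀ p q : Idx, gv p = gv q → D0 p q = 0 := by
  intro p q hg
  obtain ⟨i, m, a⟩ := p; obtain ⟨j, e, b⟩ := q
  rw [hD, Matrix.sum_apply]
  apply Finset.sum_eq_zero
  intro k _
  rw [Matrix.add_apply, Matrix.add_apply]
  have t : ∀ (A' : M4) (E : M2) (B : M4),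
      tp A' E B (i,m,a) (j,e,b) = A' i j * E m e * B a b := fun _ _ _ => rfl
  rw [t, t, t]
  fin_cases m <;> fin_cases e
  · -- m = 0, e = 0
    rcases lt_or_ge (i:ℕ) 2 with hA | hA <;> rcases lt_or_ge (j:ℕ) 2 with hB | hB
    · rw [bm_offdiag_vanish (X k) (Y k) (by omega)]
      simp [eu_apply, Fin.ext_iff]
    · exfalso; simp [gv, hA, show ¬((j:ℕ) < 2) by omega] at hg; norm_num at hg
    · exfalso; simp [gv, hB, show ¬((i:ℕ) < 2) by omega] at hg; norm_num at hg
    · rw [bm_offdiag_vanish (X k) (Y k) (by omega)]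
      simp [eu_apply, Fin.ext_iff]
  · -- m = 0, e = 1
    rcases lt_or_ge (i:ℕ) 2 with hA | hA <;> rcases lt_or_ge (b:ℕ) 2 with hB | hB
    · exfalso; simp [gv, hA, hB] at hg; norm_num at hg
    · rw [bm_left_vanish (Z k) (T k) hB, bm_bot_vanish (U k) (V k) hA]
      simp [eu_apply, Fin.ext_iff]
    · rw [bm_top_vanish (P k) (Q k) hA, bm_right_vanish (W k) (S k) hB]
      simp [eu_apply, Fin.ext_iff]
    · exfalso; simp [gv, show ¬((i:ℕ) < 2) by omega, show ¬((b:ℕ) < 2) by omega] at hg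
      norm_num at hg
  · simp [eu_apply, Fin.ext_iff]
  · simp [eu_apply, Fin.ext_iff]


/-- `D = D₀ + J D₀ J⁻¹` anticommutes with the grading `γ` iff `D₀` has the stated
block form. -/
theorem anticommute_gamma_iff (D0 : M32)
    (hD0 : ∀ p q : Idx, D0 p q ≠ 0 → p.2.1 = 0) :
    (D0 + Jconj D0) * gam + gam * (D0 + Jconj D0) = 0 ↔
    ∃ (n : ℕ) (X Y P Q Z T U V W S : Fin n → M2) (A : Fin n → M4),
      D0 = ∑ k : Fin n,
        (tp (bm 0 (X k) (Y k) 0) (eu 0 0) (A k) +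
         tp (bm (P k) (Q k) 0 0) (eu 0 1) (bm (Z k) 0 (T k) 0) +
         tp (bm 0 0 (U k) (V k)) (eu 0 1) (bm 0 (W k) 0 (S k))) := by
  constructor
  · intro h
    have hC := (anti_iff D0 hD0).1 h
    set εq : Fin (Fintype.card (Idx × Idx)) ≃ Idx × Idx := (Fintype.equivFin (Idx × Idx)).symm with hεq
    refine ⟨Fintype.card (Idx × Idx), fun k => Xf (εq k), fun k => Yf (εq k),
      fun k => Pf (εq k), fun k => Qf (εq k), fun k => Zf D0 (εq k), fun k => Tf D0 (εq k),
      fun k => Uf (εq k), fun k => Vf (εq k), fun k => Wf D0 (εq k), fun k => Sf D0 (εq k),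
      fun k => Af D0 (εq k), ?_⟩
    have hs : (∑ k : Fin (Fintype.card (Idx × Idx)), bigterm D0 (εq k))
        = ∑ pq : Idx × Idx, bigterm D0 pq := Fintype.sum_equiv εq _ _ (fun k => rfl)
    have key : D0 = ∑ k : Fin (Fintype.card (Idx × Idx)), bigterm D0 (εq k) := by
      rw [hs]
      have : ∀ pq : Idx × Idx, bigterm D0 pq = D0 pq.1 pq.2 • Matrix.single pq.1 pq.2 1 :=
        term_eq D0 hD0 hC
      rw [Finset.sum_congr rfl (fun pq _ => this pq)]
      rw [Fintype.sum_prod_type]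
      simp only [smul_E]
      exact Matrix.matrix_eq_sum_single D0
    exact key
  · rintro ⟨n, X, Y, P, Q, Z, T, U, V, W, S, A, hD⟩
    exact (anti_iff D0 hD0).2 (decomp_C D0 n X Y P Q Z T U V W S A hD)
end
end

section
/- The grading γ* = diag(1₂,-1₂) ⊗ e₁₁ ⊗ diag(1,-1₃) + diag(-1,1₃) ⊗ e₂₂ ⊗ diag(1₂,-1₂) does not commute with the represented unreduced Pati-Salam algebra: there exists m ∈ M_4(ℂ) such that γ* does not commute with π(0, 0, m) = m ⊗ e₂₂ ⊗ 1₄. However, γ* commutes with π(q₁, q₂, λ, n) for all quaternions q₁, q₂, λ ∈ ℂ, n ∈ M_3(ℂ) in the reduced representation where m = diag(λ, n). -/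
noncomputable section
open Matrix
open scoped ComplexConjugate

lemma tp_mul (A A' : M4) (E E' : M2) (B B' : M4) :
    tp A E B * tp A' E' B' = tp (A*A') (E*E') (B*B') := by
  ext p q
  simp only [tp, Matrix.mul_apply, Matrix.of_apply]
  rw [Fintype.sum_prod_type]
  conv_rhs => rw [Finset.sum_mul_sum, Finset.sum_mul_sum]
  apply Finset.sum_congr rfl; intro r1 _
  rw [Fintype.sum_prod_type, Finset.sum_comm]
  apply Finset.sum_congr rfl; intro r3 _
  rw [Finset.sum_mul]
  apply Finset.sum_congr rfl; intro r2 _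
  ring

lemma tp_zero_mid (A B : M4) : tp A 0 B = 0 := by
  ext p q; simp [tp]

lemma diag22_mul (a b c d : M2) : diag22 a b * diag22 c d = diag22 (a*c) (b*d) := by
  simp [diag22, bm, Matrix.reindex_apply, Matrix.submatrix_mul_equiv,
    Matrix.fromBlocks_multiply]

lemma diag13_mul (l m : ℂ) (n p : M3) :
    diag13 l n * diag13 m p = diag13 (l*m) (n*p) := by
  simp [diag13, Matrix.reindex_apply, Matrix.submatrix_mul_equiv,
    Matrix.fromBlocks_multiply, Matrix.diagonal_mul_diagonal]

lemma eu_mul_same {n : ℕ} (i j k : Fin n) : eu i j * eu j k = eu i k := by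
  simp [eu, Matrix.single_mul_single_same]

lemma eu_mul_ne {n : ℕ} {j k : Fin n} (i l : Fin n) (h : j ≠ k) : eu i j * eu k l = 0 := by
  simp [eu, h]


lemma eu00_11 : (eu 0 0 : M2) * eu 1 1 = 0 := eu_mul_ne _ _ (by decide)
lemma eu11_00 : (eu 1 1 : M2) * eu 0 0 = 0 := eu_mul_ne _ _ (by decide)
lemma eu00_00 : (eu 0 0 : M2) * eu 0 0 = eu 0 0 := eu_mul_same _ _ _
lemma eu11_11 : (eu 1 1 : M2) * eu 1 1 = eu 1 1 := eu_mul_same _ _ _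


lemma diag13_eq : diag13 (-1) 1 = Matrix.diagonal ![-1, 1, 1, 1] := by
  ext i j
  fin_cases i <;> fin_cases j <;>
  simp (config := { decide := true }) [diag13, Matrix.reindex_apply,
    Matrix.submatrix_apply, finSumFinEquiv, Matrix.fromBlocks, Fin.addCases,
    Matrix.one_apply, Matrix.diagonal, Fin.subNat, Fin.castLT, Fin.ext_iff, Sum.elim, -Fin.val_eq_zero_iff]

lemma diag22_eq : diag22 1 (-1) = Matrix.diagonal ![1, 1, -1, -1] := by
  ext i j
  fin_cases i <;> fin_cases j <;>
  simp (config := { decide := true }) [diag22, bm, Matrix.reindex_apply,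
    Matrix.submatrix_apply, finSumFinEquiv, Matrix.fromBlocks, Fin.addCases,
    Matrix.one_apply, Matrix.diagonal, Fin.subNat, Fin.castLT, Fin.ext_iff, Sum.elim]

/-- `γ⋆` fails to commute with the represented unreduced Pati–Salam algebra
(there is `m ∈ M₄(ℂ)` with `[γ⋆, m ⊗ e₂₂ ⊗ 1₄] ≠ 0`), but it commutes with the
whole represented reduced algebra `ℍ_R ⊕ ℍ_L ⊕ ℂ ⊕ M₃(ℂ)`. -/
theorem gamStar_commutation :
    (∃ m : M4, gamStar * tp m (eu 1 1) 1 ≠ tp m (eu 1 1) 1 * gamStar) ∧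
    (∀ (q₁ q₂ : M2) (l : ℂ) (n : M3), IsQuat q₁ → IsQuat q₂ →
      gamStar * piRed q₁ q₂ l n = piRed q₁ q₂ l n * gamStar) := by
  constructor
  · refine ⟨eu 0 1, fun h => ?_⟩
    simp only [gamStar, add_mul, mul_add, tp_mul, eu00_11, eu11_00, eu00_00, eu11_11,
      tp_zero_mid, zero_add, add_zero, mul_one, one_mul] at h
    rw [diag13_eq, diag22_eq] at h
    have h2 := congrFun (congrFun h ((0 : Fin 4), (1 : Fin 2), (0 : Fin 4)))
      ((1 : Fin 4), (1 : Fin 2), (0 : Fin 4))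
    simp only [tp, Matrix.of_apply, Matrix.mul_apply, Fin.sum_univ_four] at h2
    simp (config := { decide := true }) [eu, Matrix.single, Matrix.diagonal,
      Matrix.mul_apply, Fin.sum_univ_four] at h2
    norm_num at h2
  · intro q₁ q₂ l n _ _
    simp only [piRed, piPS, gamStar, add_mul, mul_add, tp_mul, eu00_11, eu11_00,
      eu00_00, eu11_11, tp_zero_mid, zero_add, add_zero, mul_one, one_mul,
      diag22_mul, diag13_mul, neg_one_mul, mul_neg_one]
end
end

section
/- If an operator D anticommutes with γ = diag(1₂,-1₂) ⊗ e₁₁ ⊗ 1₄ + 1₄ ⊗ e₂₂ ⊗ diag(-1₂,1₂) and commutes with β = diag(1₂,-1₂) ⊗ e₁₁ ⊗ 1₄ + 1₄ ⊗ e₂₂ ⊗ diag(1₂,-1₂), then all components of D of the form M ⊗ e₁₁ ⊗ N and M ⊗ e₂₂ ⊗ N vanish. In particular D contains no term of the form [[0, M_l],[M_l*, 0]] ⊗ e₁₁ ⊗ e₁₁ with M_l ≠ 0. -/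
noncomputable section
open Matrix
open scoped ComplexConjugate

def g1 : Fin 4 → ℂ := ![1, 1, -1, -1]

lemma g1_ne (i : Fin 4) : g1 i ≠ 0 := by
  fin_cases i <;> norm_num [g1]

def gfun : Idx → ℂ := fun p => if p.2.1 = 0 then g1 p.1 else -g1 p.2.2
def bfun : Idx → ℂ := fun p => if p.2.1 = 0 then g1 p.1 else g1 p.2.2

lemma tp_diag (f : Fin 4 → ℂ) (e : Fin 2 → ℂ) (h : Fin 4 → ℂ) :
    tp (Matrix.diagonal f) (Matrix.diagonal e) (Matrix.diagonal h)
      = Matrix.diagonal (fun p : Idx => f p.1 * e p.2.1 * h p.2.2) := by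
  ext ⟨i, j, k⟩ ⟨i', j', k'⟩
  simp only [tp, Matrix.of_apply, Matrix.diagonal_apply, Prod.mk.injEq]
  by_cases h1 : i = i' <;> by_cases h2 : j = j' <;> by_cases h3 : k = k' <;> simp_all

lemma diag22_pm : diag22 1 (-1) = Matrix.diagonal g1 := by
  ext i j
  fin_cases i <;> fin_cases j <;>
    simp [diag22, bm, g1, Matrix.one_apply, finSumFinEquiv, Matrix.diagonal_apply,
      Fin.addCases, Matrix.fromBlocks, Fin.ext_iff, Fin.subNat, Fin.castLT,
      show ((3:Fin 4):ℕ) = 3 from rfl]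

lemma diag22_mp : diag22 (-1) 1 = Matrix.diagonal (fun i => -g1 i) := by
  ext i j
  fin_cases i <;> fin_cases j <;>
    simp [diag22, bm, g1, Matrix.one_apply, finSumFinEquiv, Matrix.diagonal_apply,
      Fin.addCases, Matrix.fromBlocks, Fin.ext_iff, Fin.subNat, Fin.castLT,
      show ((3:Fin 4):ℕ) = 3 from rfl]

lemma eu00 : eu (0 : Fin 2) 0 = Matrix.diagonal ![1, 0] := by
  ext i j
  fin_cases i <;> fin_cases j <;>
    simp [eu, Matrix.single, Matrix.diagonal_apply, Fin.ext_iff]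

lemma eu11 : eu (1 : Fin 2) 1 = Matrix.diagonal ![0, 1] := by
  ext i j
  fin_cases i <;> fin_cases j <;>
    simp [eu, Matrix.single, Matrix.diagonal_apply, Fin.ext_iff]

lemma one4 : (1 : M4) = Matrix.diagonal (fun _ => (1 : ℂ)) := by
  simp [Matrix.diagonal_one]

lemma gam_diag : gam = Matrix.diagonal gfun := by
  rw [gam, diag22_pm, diag22_mp, eu00, eu11, one4, tp_diag, tp_diag,
    Matrix.diagonal_add]
  refine congrArg Matrix.diagonal ?_
  funext ⟨i, j, k⟩
  fin_cases j <;> simp [gfun]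

lemma beta_diag : betaPS = Matrix.diagonal bfun := by
  rw [betaPS, diag22_pm, eu00, eu11, one4, tp_diag, tp_diag, Matrix.diagonal_add]
  refine congrArg Matrix.diagonal ?_
  funext ⟨i, j, k⟩
  fin_cases j <;> simp [bfun]

/-- If `D` anticommutes with the grading `γ` and commutes with
`β = diag(1₂,-1₂) ⊗ e₁₁ ⊗ 1₄ + 1₄ ⊗ e₂₂ ⊗ diag(1₂,-1₂)`, then all middle-diagonal
components `M ⊗ e₁₁ ⊗ N` and `M ⊗ e₂₂ ⊗ N` of `D` vanish; in particular all
entries of the `… ⊗ e₁₁ ⊗ e₁₁` sector vanish, so `D` contains no Yukawa term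
`[[0, M_l],[M_l*, 0]] ⊗ e₁₁ ⊗ e₁₁` with `M_l ≠ 0`. -/
theorem no_yukawa_terms (D : M32)
    (hanti : D * gam + gam * D = 0)
    (hcomm : D * betaPS = betaPS * D) :
    (∀ p q : Idx, p.2.1 = q.2.1 → D p q = 0) ∧
    (∀ k l : Fin 4, D (k, 0, 0) (l, 0, 0) = 0) := by
  rw [gam_diag] at hanti
  rw [beta_diag] at hcomm
  have key : ∀ p q : Idx, p.2.1 = q.2.1 → D p q = 0 := by
    intro p q hpq
    have h1 : D p q * gfun q + gfun p * D p q = 0 := by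
      have := congrFun (congrFun hanti p) q
      simpa [Matrix.add_apply, Matrix.mul_diagonal, Matrix.diagonal_mul] using this
    have h2 : D p q * bfun q = bfun p * D p q := by
      have := congrFun (congrFun hcomm p) q
      simpa [Matrix.mul_diagonal, Matrix.diagonal_mul] using this
    obtain ⟨i, j, k⟩ := p; obtain ⟨i', j', k'⟩ := q
    simp only at hpq
    subst hpq
    fin_cases j <;>
      simp only [Fin.mk_zero, Fin.mk_one, gfun, bfun] at h1 h2 <;>
      norm_num at h1 h2
    · have h3 : D (i, 0, k) (i', 0, k') * (2 * g1 i') = 0 := by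
        linear_combination h1 + h2
      exact (mul_eq_zero.mp h3).resolve_right
        (mul_ne_zero two_ne_zero (g1_ne i'))
    · have h3 : D (i, 1, k) (i', 1, k') * (2 * g1 k') = 0 := by
        linear_combination h2 - h1
      exact (mul_eq_zero.mp h3).resolve_right
        (mul_ne_zero two_ne_zero (g1_ne k'))
  exact ⟨key, fun k l => key (k, 0, 0) (l, 0, 0) rfl⟩
end
end
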